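/- Let n ≥ 1 be an integer, m > 0, k > 0. Let u: [0,∞) → ℝ be twice continuously differentiable, strictly positive, bounded, nonincreasing (u'(r) ≤ 0 for all r), with u'(0) = 0, such that u'(r)/r remains bounded as r → 0⁺, and such that u''(r) = u(r) − 2m u(r)^{1+2k} − ((n−1)/r) u'(r) for all r > 0. Then there exists c₁ < ∞ such that |u'(r)/u(r)| ≤ c₁ r/√(1+r²) for all r > 0. -/

import Mathlib

open Set Filter Topology

set_option maxHeartbeats 1000000 in
/-- Lemma `up-u-bounded`: `|u'/u| ≤ c₁ r/⟨r⟩`: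
for a strictly positive, bounded, nonincreasing `C²` solution of the radial
equation `u'' = u − 2m u^{1+2k} − ((n−1)/r) u'` on `[0,∞)` with `u'(0) = 0` and
`u'(r)/r` bounded near `0`, there is `c₁ < ∞` with
`|u'(r)/u(r)| ≤ c₁ r/√(1+r²)` for all `r > 0`. -/
theorem stmt16 (n : ℕ) (hn : 1 ≤ n) (m k : ℝ) (hm : 0 < m) (hk : 0 < k)
    (u : ℝ → ℝ) (hu : ContDiffOn ℝ 2 u (Set.Ici 0))
    (hupos : ∀ r : ℝ, 0 ≤ r → 0 < u r)
    (hubdd : ∃ B : ℝ, ∀ r : ℝ, 0 ≤ r → u r ≤ B)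
    (humono : ∀ r : ℝ, 0 ≤ r → deriv u r ≤ 0)
    (hu'0 : deriv u 0 = 0)
    (hu'r : ∃ C : ℝ, ∃ δ > 0, ∀ r : ℝ, 0 < r → r < δ → |deriv u r| ≤ C * r)
    (heq : ∀ r : ℝ, 0 < r →
      deriv (deriv u) r
        = u r - 2 * m * u r ^ (1 + 2 * k) - ((n : ℝ) - 1) / r * deriv u r) :
    ∃ c₁ : ℝ, ∀ r : ℝ, 0 < r →
      |deriv u r / u r| ≤ c₁ * r / Real.sqrt (1 + r ^ 2) := by
  obtain ⟨C, δ, hδ, hC⟩ := hu'r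
  have hn1 : (0:ℝ) ≤ (n:ℝ) - 1 := by
    have h1 : (1:ℝ) ≤ (n:ℝ) := by exact_mod_cast hn
    linarith
  set A : ℝ := ((n:ℝ) - 1) / δ with hA
  have hA0 : 0 ≤ A := div_nonneg hn1 hδ.le
  set M : ℝ := 2 * A + 2 with hM
  have hM2 : (2:ℝ) ≤ M := by simp only [hM]; linarith
  set ψ : ℝ → ℝ := fun r => -(deriv u r / u r) with hψ
  -- differentiability infrastructure
  have hcd : ∀ r : ℝ, 0 < r → ContDiffAt ℝ 2 u r := fun r hr =>
    hu.contDiffAt (Ici_mem_nhds hr)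
  have hd1 : ∀ r : ℝ, 0 < r → HasDerivAt u (deriv u r) r := fun r hr =>
    ((hcd r hr).differentiableAt (by norm_num)).hasDerivAt
  have hcd' : ∀ r : ℝ, 0 < r → ContDiffAt ℝ 1 (deriv u) r := by
    intro r hr
    have h1 : ContDiffAt ℝ 1 (fderiv ℝ u) r := (hcd r hr).fderiv_right (by norm_num)
    exact ((ContinuousLinearMap.apply ℝ ℝ (1:ℝ)).contDiff.contDiffAt).comp r h1
  have hd2 : ∀ r : ℝ, 0 < r → HasDerivAt (deriv u) (deriv (deriv u) r) r := fun r hr =>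
    ((hcd' r hr).differentiableAt (by norm_num)).hasDerivAt
  have hune : ∀ r : ℝ, 0 ≤ r → u r ≠ 0 := fun r hr => (hupos r hr).ne'
  have hψ0 : ∀ r : ℝ, 0 ≤ r → 0 ≤ ψ r := by
    intro r hr
    have h1 : deriv u r / u r ≤ 0 :=
      div_nonpos_iff.2 (Or.inr ⟨humono r hr, (hupos r hr).le⟩)
    simp only [hψ]; linarith
  have hψcont : ∀ r : ℝ, 0 < r → ContinuousAt ψ r := by
    intro r hr
    rw [hψ]
    exact (((hcd' r hr).continuousAt).div ((hd1 r hr).continuousAt) (hune r hr.le)).neg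
  set D : ℝ → ℝ := fun r =>
    ψ r ^ 2 - ((n:ℝ) - 1) / r * ψ r + 2 * m * u r ^ (1 + 2*k) / u r - 1 with hD
  clear_value A M ψ D
  have hDψ : ∀ r : ℝ, 0 < r → HasDerivAt ψ (D r) r := by
    intro r hr
    have h := ((hd2 r hr).div (hd1 r hr) (hune r hr.le)).neg
    have hur := hune r hr.le
    have hrne := hr.ne'
    rw [hψ]
    refine h.congr_deriv ?_
    symm
    simp only [hD, hψ, heq r hr]
    field_simp
    ring
  have hDge : ∀ r : ℝ, δ ≤ r → M ≤ ψ r → ψ r ^ 2 / 2 ≤ D r := by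
    intro r hr hMr
    have hr0 : 0 < r := lt_of_lt_of_le hδ hr
    have h1 : ((n:ℝ) - 1) / r * ψ r ≤ A * ψ r := by
      apply mul_le_mul_of_nonneg_right _ (hψ0 r hr0.le)
      rw [hA]; gcongr
    have h2 : 0 ≤ 2 * m * u r ^ (1 + 2*k) / u r :=
      div_nonneg (mul_nonneg (by linarith) (Real.rpow_pos_of_pos (hupos r hr0.le) _).le)
        (hupos r hr0.le).le
    have h3 : 0 ≤ ψ r := hψ0 r hr0.le
    have h4 := mul_le_mul_of_nonneg_right hMr h3
    have h5 : ψ r * ψ r = ψ r ^ 2 := by ring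
    simp only [hD]
    generalize hE : 2 * m * u r ^ (1 + 2*k) / u r = E at h2 ⊢
    nlinarith [h4, h1, h2, h3, h5, hA0, hMr, hM2]
  -- main boundedness claim
  have hbound : ∀ r : ℝ, δ ≤ r → ψ r ≤ M := by
    by_contra hcon
    push_neg at hcon
    obtain ⟨r₀, hr₀δ, hr₀M⟩ := hcon
    have hr₀0 : 0 < r₀ := lt_of_lt_of_le hδ hr₀δ
    -- Step A : ψ stays ≥ M on [r₀, ∞)
    have stepA : ∀ r : ℝ, r₀ ≤ r → M ≤ ψ r := by
      by_contra hcon2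
      push_neg at hcon2
      set I : Set ℝ := {r | r₀ ≤ r ∧ ψ r < M} with hI
      have hIne : I.Nonempty := by
        obtain ⟨r₂, h1, h2⟩ := hcon2; exact ⟨r₂, h1, h2⟩
      have hIbdd : BddBelow I := ⟨r₀, fun x hx => hx.1⟩
      set r₁ := sInf I with hr₁
      have hr₁lb : r₀ ≤ r₁ := le_csInf hIne fun x hx => hx.1
      have hr₁0 : 0 < r₁ := lt_of_lt_of_le hr₀0 hr₁lb
      have hψr₁ : ψ r₁ ≤ M := by
        by_contra hgt
        push_neg at hgt
        have hev : ∀ᶠ x in 𝓝 r₁, M < ψ x :=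
          continuousAt_const.eventually_lt (hψcont r₁ hr₁0) hgt
        obtain ⟨ε, hε, hball⟩ := Metric.eventually_nhds_iff.1 hev
        have hlb : r₁ + ε / 2 ≤ r₁ := by
          rw [hr₁]
          apply le_csInf hIne
          intro x hx
          by_contra hlt
          push_neg at hlt
          have hx1 : r₁ ≤ x := csInf_le hIbdd hx
          have : dist x r₁ < ε := by
            rw [Real.dist_eq, abs_of_nonneg (by linarith)]; linarith
          exact absurd (hball this) (not_lt.2 hx.2.le)
        linarith
      have hr₀r₁ : r₀ < r₁ := by
        rcases lt_or_eq_of_le hr₁lb with h | h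
        · exact h
        · rw [← h] at hψr₁; linarith
      have hge : ∀ x, r₀ ≤ x → x < r₁ → M ≤ ψ x := by
        intro x h1 h2
        by_contra h
        push_neg at h
        exact absurd (csInf_le hIbdd ⟨h1, h⟩) (not_le.2 h2)
      have hmono : StrictMonoOn ψ (Set.Icc r₀ r₁) := by
        apply strictMonoOn_of_deriv_pos (convex_Icc _ _)
        · intro x hx
          exact (hψcont x (lt_of_lt_of_le hr₀0 hx.1)).continuousWithinAt
        · intro x hx
          rw [interior_Icc] at hx
          have hx0 : 0 < x := lt_of_lt_of_le hr₀0 hx.1.le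
          rw [(hDψ x hx0).deriv]
          have h1 : M ≤ ψ x := hge x hx.1.le hx.2
          have h2 := hDge x (le_trans hr₀δ hx.1.le) h1
          nlinarith [h1, h2, hM2, sq_nonneg (ψ x - 2)]
      have := hmono (Set.left_mem_Icc.2 hr₀r₁.le) (Set.right_mem_Icc.2 hr₀r₁.le) hr₀r₁
      linarith
    -- Step B : blow-up of 1/ψ
    have hψpos : ∀ r : ℝ, r₀ ≤ r → 0 < ψ r := fun r hr =>
      lt_of_lt_of_le (by linarith) (stepA r hr)
    set g : ℝ → ℝ := fun r => (ψ r)⁻¹ + r / 2 with hg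
    have hgd : ∀ x : ℝ, r₀ ≤ x → HasDerivAt g (-(D x) / ψ x ^ 2 + 1 / 2) x := by
      intro x hx
      have hx0 : 0 < x := lt_of_lt_of_le hr₀0 hx
      have h1 := ((hDψ x hx0).inv (hψpos x hx).ne')
      have h2 : HasDerivAt (fun y : ℝ => y / 2) (1/2 : ℝ) x := by
        simpa using (hasDerivAt_id x).div_const 2
      exact h1.add h2
    have hganti : AntitoneOn g (Set.Icc r₀ (r₀ + 4)) := by
      apply antitoneOn_of_deriv_nonpos (convex_Icc _ _)
      · intro x hx
        exact (hgd x hx.1).continuousAt.continuousWithinAt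
      · intro x hx
        rw [interior_Icc] at hx
        exact (hgd x hx.1.le).differentiableAt.differentiableWithinAt
      · intro x hx
        rw [interior_Icc] at hx
        rw [(hgd x hx.1.le).deriv]
        have h1 := hDge x (le_trans hr₀δ hx.1.le) (stepA x hx.1.le)
        have h2 : 0 < ψ x ^ 2 := pow_pos (hψpos x hx.1.le) 2
        have h3 : -(D x) ≤ -(ψ x ^ 2 / 2) := neg_le_neg h1
        have h4 : -(D x) / ψ x ^ 2 ≤ -(ψ x ^ 2 / 2) / ψ x ^ 2 :=
          div_le_div_of_nonneg_right h3 h2.le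
        have h5 : -(ψ x ^ 2 / 2) / ψ x ^ 2 = -(1/2) := by
          field_simp
          rw [div_self (hψpos x hx.1.le).ne']
        linarith
    -- conclude contradiction
    have e1 : g (r₀ + 4) ≤ g r₀ :=
      hganti (Set.left_mem_Icc.2 (by linarith)) (Set.right_mem_Icc.2 (by linarith)) (by linarith)
    have e2 : (ψ r₀)⁻¹ ≤ M⁻¹ := by
      apply inv_anti₀ (by linarith) (stepA r₀ le_rfl)
    have e3 : 0 < (ψ (r₀ + 4))⁻¹ := inv_pos.2 (hψpos (r₀ + 4) (by linarith))
    have e4 : M⁻¹ ≤ (2:ℝ)⁻¹ := by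
      apply inv_anti₀ (by norm_num) hM2
    simp only [hg] at e1
    norm_num at e4
    linarith
  -- minimum of u on [0, δ]
  have hucont : ContinuousOn u (Set.Icc 0 δ) := hu.continuousOn.mono (fun x hx => hx.1)
  obtain ⟨x₀, hx₀, hmin⟩ := isCompact_Icc.exists_isMinOn (Set.nonempty_Icc.2 hδ.le) hucont
  have hε : 0 < u x₀ := hupos x₀ hx₀.1
  have hM0 : (0:ℝ) ≤ M := by linarith
  refine ⟨Real.sqrt (1 + δ^2) * (|C| / u x₀ + M / δ), ?_⟩
  intro r hr
  have hs : 0 < Real.sqrt (1 + r^2) := Real.sqrt_pos.2 (by positivity)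
  have hsd : 0 < Real.sqrt (1 + δ^2) := Real.sqrt_pos.2 (by positivity)
  have habs : |deriv u r / u r| = ψ r := by
    simp only [hψ]
    rw [abs_of_nonpos (div_nonpos_iff.2 (Or.inr ⟨humono r hr.le, (hupos r hr.le).le⟩))]
  rw [habs, le_div_iff₀ hs]
  have hterm2 : 0 ≤ Real.sqrt (1 + δ^2) * (M / δ) * r :=
    mul_nonneg (mul_nonneg hsd.le (div_nonneg hM0 hδ.le)) hr.le
  have hsplit : Real.sqrt (1 + δ^2) * (|C| / u x₀ + M / δ) * r
      = Real.sqrt (1 + δ^2) * (|C| / u x₀) * r + Real.sqrt (1 + δ^2) * (M / δ) * r := by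
    ring
  rcases lt_or_ge r δ with hrδ | hrδ
  · -- small r
    have h1 : ψ r ≤ |C| * r / u x₀ := by
      simp only [hψ]
      have h2 : -(deriv u r / u r) = |deriv u r| / u r := by
        rw [abs_of_nonpos (humono r hr.le), neg_div]
      rw [h2]
      apply div_le_div₀ (by positivity) _ hε (isMinOn_iff.1 hmin r ⟨hr.le, hrδ.le⟩)
      exact le_trans (hC r hr hrδ) (mul_le_mul_of_nonneg_right (le_abs_self C) hr.le)
    have hsle : Real.sqrt (1 + r^2) ≤ Real.sqrt (1 + δ^2) :=
      Real.sqrt_le_sqrt (by nlinarith)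
    calc ψ r * Real.sqrt (1 + r^2)
        ≤ (|C| * r / u x₀) * Real.sqrt (1 + r^2) :=
          mul_le_mul_of_nonneg_right h1 hs.le
      _ ≤ (|C| * r / u x₀) * Real.sqrt (1 + δ^2) :=
          mul_le_mul_of_nonneg_left hsle (by positivity)
      _ = Real.sqrt (1 + δ^2) * (|C| / u x₀) * r := by ring
      _ ≤ Real.sqrt (1 + δ^2) * (|C| / u x₀ + M / δ) * r := by
          rw [hsplit]; linarith
  · -- large r
    have h1 : ψ r ≤ M := hbound r hrδ
    have e1 : Real.sqrt (δ^2 * (1 + r^2)) = δ * Real.sqrt (1 + r^2) := by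
      rw [Real.sqrt_mul (by positivity), Real.sqrt_sq hδ.le]
    have e2 : Real.sqrt (r^2 * (1 + δ^2)) = r * Real.sqrt (1 + δ^2) := by
      rw [Real.sqrt_mul (by positivity), Real.sqrt_sq hr.le]
    have key : δ * Real.sqrt (1 + r^2) ≤ r * Real.sqrt (1 + δ^2) := by
      rw [← e1, ← e2]
      apply Real.sqrt_le_sqrt
      have hsq : δ^2 ≤ r^2 := pow_le_pow_left₀ hδ.le hrδ 2
      nlinarith [hsq]
    have e3 : M * Real.sqrt (1 + r^2) = (M / δ) * (δ * Real.sqrt (1 + r^2)) := by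
      rw [← mul_assoc, div_mul_cancel₀ _ hδ.ne']
    calc ψ r * Real.sqrt (1 + r^2)
        ≤ M * Real.sqrt (1 + r^2) := mul_le_mul_of_nonneg_right h1 hs.le
      _ = (M / δ) * (δ * Real.sqrt (1 + r^2)) := e3
      _ ≤ (M / δ) * (r * Real.sqrt (1 + δ^2)) :=
          mul_le_mul_of_nonneg_left key (div_nonneg hM0 hδ.le)
      _ = Real.sqrt (1 + δ^2) * (M / δ) * r := by ring
      _ ≤ Real.sqrt (1 + δ^2) * (|C| / u x₀ + M / δ) * r := by
          rw [hsplit]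
          have : 0 ≤ Real.sqrt (1 + δ^2) * (|C| / u x₀) * r := by positivity
          linarith
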